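/- arXiv:math/0511680 — 3 statements merged into one kernel-verified Lean document; each statement's English description precedes it below -/
import Mathlib

section
/- Let M > 0 and let Theta = [0, a_1, a_2, ...] and Phi = [0, b_1, b_2, ...] in k((X^{-1})) have all partial quotients of degree at most M. If a_i = b_i for i = 1, ..., n but a_{n+1} != b_{n+1}, then |Theta - Phi| >= 1/(2^{2M} |q_n|^2), where q_n is the denominator of the n-th convergent of Theta. -/
open Polynomial Filter

noncomputable section
open scoped Classical

namespace Littlewood

variable (k : Type*) [Field k]

/-- The element `X` of `k((X⁻¹))`: the inverse of the Laurent-series variable `t = X⁻¹`. -/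
def XLS : LaurentSeries k := (HahnSeries.single (1 : ℤ) (1 : k))⁻¹

variable {k}

/-- Embedding of `k[X]` into `k((X⁻¹))`, sending the polynomial variable to `X`. -/
def emb (p : Polynomial k) : LaurentSeries k := Polynomial.aeval (XLS k) p

/-- The degree of a Laurent series in `X⁻¹`: if `F = ∑_{h ≥ -m} f_h X^{-h}` with
`f_{-m} ≠ 0` then `deg F = m`. -/
def deg (F : LaurentSeries k) : ℤ := -F.order

/-- The norm `|F| = 2 ^ deg F`, with `|0| = 0`. -/
def lnorm (F : LaurentSeries k) : ℝ := if F = 0 then 0 else (2 : ℝ) ^ (deg F)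

/-- Fractional part: the part of the series comprising only negative powers of `X`. -/
def frac (F : LaurentSeries k) : LaurentSeries k where
  coeff n := if 1 ≤ n then F.coeff n else 0
  isPWO_support' := F.isPWO_support'.mono (fun n hn => by
    simp only [Function.mem_support] at hn ⊢
    intro h
    exact hn (by simp [h]))

/-- `‖F‖`: the norm of the fractional part of `F`. -/
def fnorm (F : LaurentSeries k) : ℝ := lnorm (frac F)

/-- `F` is a rational function. -/
def IsRat (F : LaurentSeries k) : Prop :=
  ∃ p q : Polynomial k, q ≠ 0 ∧ F * emb q = emb p

/-- The polynomial part of a Laurent series (the part with nonnegative powers of `X`). -/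
def polyPart (F : LaurentSeries k) : Polynomial k :=
  ∑ i ∈ Finset.range ((-F.order).toNat + 1), Polynomial.C (F.coeff (-(i : ℤ))) * Polynomial.X ^ i

/-- The complete quotients of the continued fraction algorithm applied to `F`. -/
def cfRem (F : LaurentSeries k) : ℕ → LaurentSeries k
  | 0 => F
  | n + 1 => (cfRem F n - emb (polyPart (cfRem F n)))⁻¹

/-- The partial quotients of the continued fraction expansion of `F`. -/
def pq (F : LaurentSeries k) (n : ℕ) : Polynomial k := polyPart (cfRem F n)

/-- Denominators `q_n` of the convergents of the continued fraction with
partial quotients `a`. -/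
def den (a : ℕ → Polynomial k) : ℕ → Polynomial k
  | 0 => 1
  | 1 => a 1
  | n + 2 => a (n + 2) * den a (n + 1) + den a n

/-- Numerators `p_n` of the convergents. -/
def num (a : ℕ → Polynomial k) : ℕ → Polynomial k
  | 0 => a 0
  | 1 => a 1 * a 0 + 1
  | n + 2 => a (n + 2) * num a (n + 1) + num a n

/-- The value of a finite continued fraction `[b_0, b_1, …, b_m]` over `k[X]`. -/
def finCF : List (Polynomial k) → LaurentSeries k
  | [] => 0
  | [b] => emb b
  | b :: l => emb b + (finCF l)⁻¹

/-- `F` is badly approximable. -/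
def Bad (F : LaurentSeries k) : Prop :=
  ∃ c : ℝ, 0 < c ∧ ∀ q : Polynomial k, q ≠ 0 → c ≤ lnorm (emb q) * fnorm (emb q * F)

-- auxiliary lemmas
lemma le_order_of {F : LaurentSeries k} (hF : F ≠ 0) (n : ℤ)
    (h : ∀ m < n, F.coeff m = 0) : n ≤ F.order := by
  by_contra hc
  exact HahnSeries.coeff_order_eq_zero.not.mpr hF (h _ (lt_of_not_ge hc))

lemma XLS_eq : XLS k = HahnSeries.single (-1 : ℤ) (1 : k) := by
  rw [XLS, inv_eq_iff_eq_inv]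
  symm
  apply inv_eq_of_mul_eq_one_right
  rw [HahnSeries.single_mul_single]
  norm_num

lemma algebraMap_single (a : k) :
    algebraMap k (LaurentSeries k) a = HahnSeries.single 0 a := by
  rw [HahnSeries.algebraMap_apply', ← PowerSeries.C_eq_algebraMap, HahnSeries.ofPowerSeries_C,
    HahnSeries.C_apply]

lemma emb_coeff (p : Polynomial k) (m : ℤ) :
    (emb p).coeff m = if m ≤ 0 then p.coeff (-m).toNat else 0 := by
  induction p using Polynomial.induction_on' with
  | add f g hf hg =>
    simp only [emb, map_add, HahnSeries.coeff_add, Polynomial.coeff_add] at *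
    rw [hf, hg]
    split <;> simp
  | monomial n a =>
    rw [emb, Polynomial.aeval_monomial, XLS_eq, HahnSeries.single_pow, algebraMap_single,
      HahnSeries.single_mul_single, HahnSeries.coeff_single]
    simp only [one_pow, smul_eq_mul, nsmul_eq_mul, mul_neg, mul_one, zero_add,
      Polynomial.coeff_monomial]
    by_cases h1 : m = -(n : ℤ)
    · subst h1
      rw [if_pos rfl, if_pos (by omega : -(n:ℤ) ≤ 0), neg_neg, Int.toNat_natCast, if_pos rfl]
    · rw [if_neg h1]
      by_cases h2 : m ≤ 0
      · rw [if_pos h2, if_neg (by omega)]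
      · rw [if_neg h2]
lemma emb_coeff_neg (p : Polynomial k) (i : ℕ) : (emb p).coeff (-(i : ℤ)) = p.coeff i := by
  rw [emb_coeff, if_pos (by omega)]
  simp

lemma emb_eq_zero_iff {p : Polynomial k} : emb p = 0 ↔ p = 0 := by
  constructor
  · intro h
    ext i
    have := emb_coeff_neg p i
    rw [h] at this
    simpa using this.symm
  · rintro rfl; simp [emb]

lemma order_emb {p : Polynomial k} (hp : p ≠ 0) : (emb p).order = -(p.natDegree : ℤ) := by
  apply le_antisymm
  · apply HahnSeries.order_le_of_coeff_ne_zero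
    rw [emb_coeff_neg]
    exact Polynomial.leadingCoeff_ne_zero.mpr hp
  · apply le_order_of (emb_eq_zero_iff.not.mpr hp)
    intro m hm
    rw [emb_coeff, if_pos (by omega)]
    apply Polynomial.coeff_eq_zero_of_natDegree_lt
    omega

lemma lnorm_nonneg (F : LaurentSeries k) : 0 ≤ lnorm F := by
  rw [lnorm]; split
  · exact le_refl 0
  · positivity

lemma lnorm_pos {F : LaurentSeries k} (hF : F ≠ 0) : 0 < lnorm F := by
  rw [lnorm, if_neg hF]; positivity

lemma lnorm_eq {F : LaurentSeries k} (hF : F ≠ 0) : lnorm F = 2 ^ (-F.order : ℤ) := by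
  rw [lnorm, if_neg hF, deg]

lemma lnorm_mul (F G : LaurentSeries k) : lnorm (F * G) = lnorm F * lnorm G := by
  by_cases hF : F = 0
  · simp [hF, lnorm]
  by_cases hG : G = 0
  · simp [hG, lnorm]
  rw [lnorm_eq hF, lnorm_eq hG, lnorm_eq (mul_ne_zero hF hG),
    HahnSeries.order_mul hF hG, neg_add, zpow_add₀ (by norm_num : (2:ℝ) ≠ 0)]

lemma order_inv {F : LaurentSeries k} (hF : F ≠ 0) : (F⁻¹).order = -F.order := by
  have h1 : F * F⁻¹ = 1 := mul_inv_cancel₀ hF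
  have h2 := HahnSeries.order_mul hF (inv_ne_zero hF)
  rw [h1, HahnSeries.order_one] at h2
  omega

lemma lnorm_emb {p : Polynomial k} (hp : p ≠ 0) :
    lnorm (emb p) = 2 ^ (p.natDegree : ℤ) := by
  rw [lnorm_eq (emb_eq_zero_iff.not.mpr hp), order_emb hp, neg_neg]
lemma polyPart_coeff (F : LaurentSeries k) (i : ℕ) :
    (polyPart F).coeff i = F.coeff (-(i : ℤ)) := by
  rw [polyPart, Polynomial.finset_sum_coeff]
  simp only [Polynomial.coeff_C_mul, Polynomial.coeff_X_pow, mul_ite, mul_one, mul_zero]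
  rw [Finset.sum_ite_eq _ i]
  split
  · rfl
  · rename_i hi
    simp only [Finset.mem_range, not_lt] at hi
    symm
    by_cases hF : F = 0
    · simp [hF]
    apply HahnSeries.coeff_eq_zero_of_lt_order
    have h1 : (-F.order) ≤ ((-F.order).toNat : ℤ) := Int.self_le_toNat _
    omega

lemma sub_emb_polyPart (F : LaurentSeries k) : F - emb (polyPart F) = frac F := by
  ext m
  rw [HahnSeries.coeff_sub, emb_coeff]
  show _ = if 1 ≤ m then F.coeff m else 0
  by_cases h : m ≤ 0
  · rw [if_pos h, if_neg (by omega)]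
    have : (polyPart F).coeff (-m).toNat = F.coeff (-((-m).toNat : ℤ)) := polyPart_coeff F _
    rw [this]
    have : -(((-m).toNat : ℤ)) = m := by omega
    rw [this, sub_self]
  · rw [if_neg h, if_pos (by omega), sub_zero]

lemma frac_order {F : LaurentSeries k} (h : frac F ≠ 0) : 1 ≤ (frac F).order := by
  apply le_order_of h
  intro m hm
  show (if 1 ≤ m then F.coeff m else 0) = 0
  rw [if_neg (by omega)]

-- rationality
lemma isRat_emb (p : Polynomial k) : IsRat (emb p) := ⟨p, 1, one_ne_zero, by simp [emb]⟩

lemma not_isRat_ne_zero {F : LaurentSeries k} (h : ¬ IsRat F) : F ≠ 0 := by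
  rintro rfl
  exact h ⟨0, 1, one_ne_zero, by simp [emb]⟩

lemma not_isRat_sub_emb {F : LaurentSeries k} (h : ¬ IsRat F) (p : Polynomial k) :
    ¬ IsRat (F - emb p) := by
  rintro ⟨r, q, hq, hrq⟩
  refine h ⟨r + p * q, q, hq, ?_⟩
  have : emb (r + p * q) = emb r + emb p * emb q := by simp [emb, map_add, map_mul]
  rw [this, ← hrq]
  ring

lemma not_isRat_inv {F : LaurentSeries k} (h : ¬ IsRat F) : ¬ IsRat F⁻¹ := by
  rintro ⟨p, q, hq, hpq⟩
  have hF : F ≠ 0 := not_isRat_ne_zero h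
  have hp : p ≠ 0 := by
    rintro rfl
    rw [emb_eq_zero_iff.mpr rfl, mul_eq_zero] at hpq
    rcases hpq with h1 | h1
    · exact inv_ne_zero hF h1
    · exact emb_eq_zero_iff.not.mpr hq h1
  refine h ⟨q, p, hp, ?_⟩
  field_simp at hpq ⊢
  linear_combination -hpq

lemma not_isRat_cfRem {F : LaurentSeries k} (h : ¬ IsRat F) (m : ℕ) :
    ¬ IsRat (cfRem F m) := by
  induction m with
  | zero => exact h
  | succ m ih => exact not_isRat_inv (not_isRat_sub_emb ih _)

lemma cfRem_ne_zero {F : LaurentSeries k} (h : ¬ IsRat F) (m : ℕ) : cfRem F m ≠ 0 :=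
  not_isRat_ne_zero (not_isRat_cfRem h m)

lemma frac_cfRem_ne_zero {F : LaurentSeries k} (h : ¬ IsRat F) (m : ℕ) :
    cfRem F m - emb (polyPart (cfRem F m)) ≠ 0 := by
  intro hc
  have : cfRem F m = emb (polyPart (cfRem F m)) := by linear_combination (norm := abel) hc
  exact not_isRat_cfRem h m (this ▸ isRat_emb _)

lemma cfRem_order_neg {F : LaurentSeries k} (h : ¬ IsRat F) (m : ℕ) :
    (cfRem F (m + 1)).order ≤ -1 := by
  have h1 : cfRem F (m + 1) = (cfRem F m - emb (polyPart (cfRem F m)))⁻¹ := rfl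
  have h2 := frac_cfRem_ne_zero h m
  rw [h1, order_inv h2]
  have := frac_order (F := cfRem F m) (by rwa [← sub_emb_polyPart])
  rw [← sub_emb_polyPart] at this
  omega
lemma pq_ne_zero {F : LaurentSeries k} (h : ¬ IsRat F) {m : ℕ} (hm : 1 ≤ m) :
    pq F m ≠ 0 := by
  intro hc
  have h1 : (pq F m).coeff ((-(cfRem F m).order).toNat) =
      (cfRem F m).coeff (-(((-(cfRem F m).order).toNat : ℤ))) := polyPart_coeff _ _
  obtain ⟨m', rfl⟩ : ∃ m', m = m' + 1 := ⟨m - 1, by omega⟩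
  have h2 := cfRem_order_neg h m'
  have h3 : -(((-(cfRem F (m'+1)).order).toNat : ℤ)) = (cfRem F (m'+1)).order := by omega
  rw [h3] at h1
  have := HahnSeries.coeff_order_eq_zero.not.mpr (cfRem_ne_zero h (m'+1))
  rw [← h1, hc] at this
  simp at this

lemma pq_natDegree {F : LaurentSeries k} (h : ¬ IsRat F) {m : ℕ} (hm : 1 ≤ m) :
    ((pq F m).natDegree : ℤ) = -(cfRem F m).order := by
  obtain ⟨m', rfl⟩ : ∃ m', m = m' + 1 := ⟨m - 1, by omega⟩
  have h2 := cfRem_order_neg h m'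
  have hNG : -(((-(cfRem F (m'+1)).order).toNat : ℤ)) = (cfRem F (m'+1)).order := by omega
  have hle : (pq F (m'+1)).natDegree ≤ (-(cfRem F (m'+1)).order).toNat := by
    rw [Polynomial.natDegree_le_iff_coeff_eq_zero]
    intro j hj
    rw [pq, polyPart_coeff]
    apply HahnSeries.coeff_eq_zero_of_lt_order
    omega
  have hge : (-(cfRem F (m'+1)).order).toNat ≤ (pq F (m'+1)).natDegree := by
    apply Polynomial.le_natDegree_of_ne_zero
    rw [pq, polyPart_coeff, hNG]
    exact HahnSeries.coeff_order_eq_zero.not.mpr (cfRem_ne_zero h (m'+1))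
  omega

lemma pq_natDegree_pos {F : LaurentSeries k} (h : ¬ IsRat F) {m : ℕ} (hm : 1 ≤ m) :
    1 ≤ (pq F m).natDegree := by
  have h1 := pq_natDegree h hm
  obtain ⟨m', rfl⟩ : ∃ m', m = m' + 1 := ⟨m - 1, by omega⟩
  have h2 := cfRem_order_neg h m'
  omega

lemma cfRem_inv_succ {F : LaurentSeries k} (h : ¬ IsRat F) (m : ℕ) :
    (cfRem F (m + 1))⁻¹ = cfRem F m - emb (pq F m) := by
  have h1 : cfRem F (m + 1) = (cfRem F m - emb (polyPart (cfRem F m)))⁻¹ := rfl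
  rw [h1, inv_inv, pq]

lemma order_inv_sub_inv {A B : LaurentSeries k} (hA : A ≠ 0) (hB : B ≠ 0) (hAB : A ≠ B) :
    A⁻¹ - B⁻¹ ≠ 0 ∧ (A⁻¹ - B⁻¹).order = (A - B).order - A.order - B.order := by
  have key : A⁻¹ - B⁻¹ = (B - A) * (A * B)⁻¹ := by field_simp
  have hBA : B - A ≠ 0 := sub_ne_zero.mpr (Ne.symm hAB)
  have hABn : (A * B)⁻¹ ≠ 0 := inv_ne_zero (mul_ne_zero hA hB)
  constructor
  · rw [key]; exact mul_ne_zero hBA hABn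
  · rw [key, HahnSeries.order_mul hBA hABn, order_inv (mul_ne_zero hA hB),
      HahnSeries.order_mul hA hB, ← neg_sub A B, HahnSeries.order_neg]
    ring

lemma step_identity {Θ Φ : LaurentSeries k} (hΘ : ¬ IsRat Θ) (hΦ : ¬ IsRat Φ) (m : ℕ)
    (hpq : pq Θ m = pq Φ m) (hne : cfRem Θ (m + 1) ≠ cfRem Φ (m + 1)) :
    cfRem Θ m - cfRem Φ m ≠ 0 ∧
    (cfRem Θ m - cfRem Φ m).order = (cfRem Θ (m + 1) - cfRem Φ (m + 1)).order
      - (cfRem Θ (m + 1)).order - (cfRem Φ (m + 1)).order := by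
  have h1 : cfRem Θ m - cfRem Φ m = (cfRem Θ (m + 1))⁻¹ - (cfRem Φ (m + 1))⁻¹ := by
    rw [cfRem_inv_succ hΘ m, cfRem_inv_succ hΦ m, hpq]
    ring
  rw [h1]
  exact order_inv_sub_inv (cfRem_ne_zero hΘ (m+1)) (cfRem_ne_zero hΦ (m+1)) hne

lemma telescope {Θ Φ : LaurentSeries k} (hΘ : ¬ IsRat Θ) (hΦ : ¬ IsRat Φ) (m : ℕ)
    (hpq : ∀ i ≤ m, pq Θ i = pq Φ i) (hne : cfRem Θ (m + 1) ≠ cfRem Φ (m + 1)) :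
    Θ - Φ ≠ 0 ∧ (Θ - Φ).order = (cfRem Θ (m + 1) - cfRem Φ (m + 1)).order
      - ∑ j ∈ Finset.range (m + 1), ((cfRem Θ (j + 1)).order + (cfRem Φ (j + 1)).order) := by
  induction m with
  | zero =>
    have h0 := step_identity hΘ hΦ 0 (hpq 0 le_rfl) hne
    refine ⟨h0.1, ?_⟩
    have : (Θ - Φ : LaurentSeries k) = cfRem Θ 0 - cfRem Φ 0 := rfl
    rw [this, h0.2, Finset.sum_range_one]
    ring
  | succ m ih =>
    have hstep := step_identity hΘ hΦ (m + 1) (hpq (m + 1) le_rfl) hne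
    have hne' : cfRem Θ (m + 1) ≠ cfRem Φ (m + 1) := sub_ne_zero.mp hstep.1
    obtain ⟨h1, h2⟩ := ih (fun i hi => hpq i (by omega)) hne'
    refine ⟨h1, ?_⟩
    rw [h2, hstep.2, Finset.sum_range_succ _ (m + 1)]
    ring
lemma den_spec (a : ℕ → Polynomial k) (ha : ∀ j, 1 ≤ j → a j ≠ 0 ∧ 1 ≤ (a j).natDegree) :
    ∀ n, den a n ≠ 0 ∧ (den a n).natDegree = ∑ j ∈ Finset.range n, (a (j+1)).natDegree := by
  intro n
  induction n using Nat.strong_induction_on with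
  | _ n ih =>
    match n with
    | 0 => exact ⟨one_ne_zero, by simp [den]⟩
    | 1 =>
      refine ⟨(ha 1 le_rfl).1, ?_⟩
      show (a 1).natDegree = _
      rw [Finset.sum_range_one]
    | (n+2) =>
      obtain ⟨h1, e1⟩ := ih (n+1) (by omega)
      obtain ⟨h0, e0⟩ := ih n (by omega)
      obtain ⟨ha2, hd2⟩ := ha (n+2) (by omega)
      have hP : a (n+2) * den a (n+1) ≠ 0 := mul_ne_zero ha2 h1
      have hPdeg : (a (n+2) * den a (n+1)).natDegree
          = (a (n+2)).natDegree + (den a (n+1)).natDegree := Polynomial.natDegree_mul ha2 h1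
      have hmono : (den a n).natDegree < (a (n+2) * den a (n+1)).natDegree := by
        rw [hPdeg, e1, e0, Finset.sum_range_succ]
        omega
      have hkey : (den a (n+2)).natDegree = (a (n+2) * den a (n+1)).natDegree := by
        show (a (n+2) * den a (n+1) + den a n).natDegree = _
        exact Polynomial.natDegree_add_eq_left_of_natDegree_lt hmono
      constructor
      · show a (n+2) * den a (n+1) + den a n ≠ 0
        intro hc
        have hrfl : den a (n+2) = a (n+2) * den a (n+1) + den a n := rfl
        rw [hrfl, hc, Polynomial.natDegree_zero, hPdeg, e1] at hkey
        omega
      · rw [hkey, hPdeg, e1, Finset.sum_range_succ _ (n+1), show n+1+1 = n+2 from rfl]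
        omega
theorem far_if_distinct_partial_quotient {k : Type*} [Field k] (M : ℝ) (hM : 0 < M)
    (Θ Φ : LaurentSeries k) (hΘ : ¬ IsRat Θ) (hΦ : ¬ IsRat Φ)
    (hΘ0 : pq Θ 0 = 0) (hΦ0 : pq Φ 0 = 0)
    (hΘM : ∀ i : ℕ, 1 ≤ i → ((pq Θ i).natDegree : ℝ) ≤ M)
    (hΦM : ∀ i : ℕ, 1 ≤ i → ((pq Φ i).natDegree : ℝ) ≤ M)
    (n : ℕ) (h : ∀ i : ℕ, 1 ≤ i → i ≤ n → pq Θ i = pq Φ i)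
    (hne : pq Θ (n + 1) ≠ pq Φ (n + 1)) :
    1 / ((2 : ℝ) ^ (2 * M) * lnorm (emb (den (pq Θ) n)) ^ 2) ≤ lnorm (Θ - Φ) := by
  have hneC : cfRem Θ (n+1) ≠ cfRem Φ (n+1) := fun hc => hne (by rw [pq, pq, hc])
  have hpq' : ∀ i ≤ n, pq Θ i = pq Φ i := by
    intro i hi
    rcases Nat.eq_zero_or_pos i with rfl | hi1
    · rw [hΘ0, hΦ0]
    · exact h i hi1 hi
  obtain ⟨hsub, horder⟩ := telescope hΘ hΦ n hpq' hneC
  -- the (n+1)-st complete quotients differ at a nonnegative power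
  have hdiff : (cfRem Θ (n+1) - cfRem Φ (n+1)).order ≤ 0 := by
    have hco : ∃ i : ℕ, (pq Θ (n+1)).coeff i ≠ (pq Φ (n+1)).coeff i := by
      by_contra hc
      push_neg at hc
      exact hne (Polynomial.ext hc)
    obtain ⟨i, hi⟩ := hco
    have hcc : (cfRem Θ (n+1) - cfRem Φ (n+1)).coeff (-(i:ℤ)) ≠ 0 := by
      rw [HahnSeries.coeff_sub, ← polyPart_coeff, ← polyPart_coeff]
      exact sub_ne_zero.mpr hi
    have := HahnSeries.order_le_of_coeff_ne_zero hcc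
    omega
  -- denominator degree
  have hden := den_spec (pq Θ) (fun j hj => ⟨pq_ne_zero hΘ hj, pq_natDegree_pos hΘ hj⟩) n
  -- the sum of orders
  have hsum1 : ∑ j ∈ Finset.range n, ((cfRem Θ (j+1)).order + (cfRem Φ (j+1)).order)
      = -(2 * ((den (pq Θ) n).natDegree : ℤ)) := by
    have hterm : ∀ j ∈ Finset.range n, (cfRem Θ (j+1)).order + (cfRem Φ (j+1)).order
        = -(2 * ((pq Θ (j+1)).natDegree : ℤ)) := by
      intro j hj
      simp only [Finset.mem_range] at hj
      have e1 := pq_natDegree hΘ (show 1 ≤ j+1 by omega)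
      have e2 := pq_natDegree hΦ (show 1 ≤ j+1 by omega)
      have e3 : pq Θ (j+1) = pq Φ (j+1) := h (j+1) (by omega) (by omega)
      rw [← e3] at e2
      omega
    rw [Finset.sum_congr rfl hterm, hden.2]
    push_cast
    rw [Finset.sum_neg_distrib, Finset.mul_sum]
  have eΘ := pq_natDegree hΘ (show 1 ≤ n+1 by omega)
  have eΦ := pq_natDegree hΦ (show 1 ≤ n+1 by omega)
  have horder2 : -((Θ - Φ).order) ≥
      -(2 * ((den (pq Θ) n).natDegree : ℤ) + (pq Θ (n+1)).natDegree + (pq Φ (n+1)).natDegree) := by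
    rw [horder, Finset.sum_range_succ, hsum1]
    omega
  -- numerics
  rw [lnorm_eq hsub, lnorm_emb hden.1]
  have h2 : (1:ℝ) < 2 := one_lt_two
  have hb : (0:ℝ) < 2 := two_pos
  rw [← Real.rpow_intCast (2:ℝ) ((den (pq Θ) n).natDegree : ℤ),
    ← Real.rpow_intCast (2:ℝ) (-(Θ - Φ).order),
    ← Real.rpow_natCast _ 2, ← Real.rpow_mul hb.le, ← Real.rpow_add hb,
    div_le_iff₀ (by positivity), ← Real.rpow_add hb]
  nth_rewrite 1 [show (1:ℝ) = (2:ℝ) ^ (0:ℝ) by rw [Real.rpow_zero]]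
  apply Real.rpow_le_rpow_of_exponent_le h2.le
  have hM1 := hΘM (n+1) (by omega)
  have hM2 := hΦM (n+1) (by omega)
  have hc : ((-(Θ - Φ).order : ℤ) : ℝ) ≥
      -(2 * ((den (pq Θ) n).natDegree : ℝ) + ((pq Θ (n+1)).natDegree : ℝ) + ((pq Φ (n+1)).natDegree : ℝ)) := by
    have := horder2
    push_cast
    exact_mod_cast by exact_mod_cast (by push_cast; exact_mod_cast this : ((-(Θ - Φ).order : ℤ) : ℝ) ≥ ((-(2 * ((den (pq Θ) n).natDegree : ℤ) + (pq Θ (n+1)).natDegree + (pq Φ (n+1)).natDegree) : ℤ) : ℝ))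
  push_cast at hc ⊢
  nlinarith [hc, hM1, hM2]
end Littlewood
end
end

section
/- Let p be a prime and Theta_p in F_p((X^{-1})) the power series with continued fraction expansion [0, X, X^p, X^{p^2}, X^{p^3}, ...]. Then Theta_p is a root of the polynomial Z^{p+1} + X Z - 1. -/
open Polynomial Filter

noncomputable section
open scoped Classical

namespace Littlewood

variable (k : Type*) [Field k]

variable {k}

lemma coeff_polyPart (F : LaurentSeries k) (j : ℕ) :
    (polyPart F).coeff j = if j ≤ (-F.order).toNat then F.coeff (-(j : ℤ)) else 0 := by
  unfold polyPart
  rw [Polynomial.finset_sum_coeff]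
  simp only [Polynomial.coeff_C_mul, Polynomial.coeff_X_pow, mul_ite, mul_one, mul_zero]
  rw [Finset.sum_ite_eq (Finset.range ((-F.order).toNat + 1)) j
    (fun i => F.coeff (-(i : ℤ)))]
  simp [Nat.lt_succ_iff]

lemma polyPart_X_pow {F : LaurentSeries k} {m : ℕ}
    (hF : polyPart F = Polynomial.X ^ m) : F ≠ 0 ∧ F.order = -(m : ℤ) := by
  have hcm := coeff_polyPart F m
  rw [hF, Polynomial.coeff_X_pow, if_pos rfl] at hcm
  have hmle : m ≤ (-F.order).toNat := by
    by_contra hc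
    rw [if_neg hc] at hcm
    exact one_ne_zero (α := k) hcm
  rw [if_pos hmle] at hcm
  have hF1 : F.coeff (-(m : ℤ)) ≠ 0 := by rw [← hcm]; exact one_ne_zero
  have hFne : F ≠ 0 := HahnSeries.ne_zero_of_coeff_ne_zero hF1
  refine ⟨hFne, le_antisymm (HahnSeries.order_le_of_coeff_ne_zero hF1) ?_⟩
  by_contra hlt
  push_neg at hlt
  have hneg : (0 : ℤ) ≤ -F.order := by
    have : F.order < 0 := lt_of_lt_of_le hlt (by simp)
    omega
  set N := (-F.order).toNat with hN
  have hNval : (N : ℤ) = -F.order := Int.toNat_of_nonneg hneg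
  have hmN : m < N := by
    have : (m : ℤ) < (N : ℤ) := by rw [hNval]; omega
    exact_mod_cast this
  have hcN := coeff_polyPart F N
  rw [hF, Polynomial.coeff_X_pow, if_neg (Nat.ne_of_gt hmN), if_pos le_rfl] at hcN
  have : F.coeff (-(N : ℤ)) ≠ 0 := by
    have : -(N : ℤ) = F.order := by omega
    rw [this]
    exact HahnSeries.coeff_order_eq_zero.not.mpr hFne
  exact this hcN.symm

lemma ls_order_inv {F : LaurentSeries k} (hF : F ≠ 0) : F⁻¹.order = -F.order := by
  have h1 : (F⁻¹ * F).order = F⁻¹.order + F.order :=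
    HahnSeries.order_mul (inv_ne_zero hF) hF
  rw [inv_mul_cancel₀ hF, HahnSeries.order_one] at h1
  omega

theorem mahler_example_algebraic (p : ℕ) [Fact p.Prime] (Θ : LaurentSeries (ZMod p))
    (hΘ : ¬ IsRat Θ) (h0 : pq Θ 0 = 0)
    (h : ∀ n : ℕ, pq Θ (n + 1) = Polynomial.X ^ p ^ n) :
    Θ ^ (p + 1) + emb (Polynomial.X : Polynomial (ZMod p)) * Θ - 1 = 0 := by
  classical
  have hp : p.Prime := Fact.out
  have hp2 : 2 ≤ p := hp.two_le
  haveI : CharP (LaurentSeries (ZMod p)) p :=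
    charP_of_injective_ringHom (HahnSeries.C_injective (Γ := ℤ) (R := ZMod p)) p
  -- basic facts about the complete quotients
  have hpp : ∀ m : ℕ, polyPart (cfRem Θ (m + 1)) = Polynomial.X ^ p ^ m := fun m => h m
  have hkey : ∀ m : ℕ, cfRem Θ (m + 1) ≠ 0 ∧ (cfRem Θ (m + 1)).order = -((p : ℤ) ^ m) := by
    intro m
    obtain ⟨h1, h2⟩ := polyPart_X_pow (hpp m)
    exact ⟨h1, by rw [h2]; push_cast; ring⟩
  have hne : ∀ m : ℕ, cfRem Θ (m + 1) ≠ 0 := fun m => (hkey m).1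
  have hord : ∀ m : ℕ, (cfRem Θ (m + 1)).order = -((p : ℤ) ^ m) := fun m => (hkey m).2
  -- the recurrence relation
  have hrel : ∀ m : ℕ, (cfRem Θ (m + 2))⁻¹ = cfRem Θ (m + 1) - emb (Polynomial.X ^ p ^ m) := by
    intro m
    have hdef : cfRem Θ (m + 2) = (cfRem Θ (m + 1) - emb (polyPart (cfRem Θ (m + 1))))⁻¹ := rfl
    rw [hpp m] at hdef
    have hbase : cfRem Θ (m + 1) - emb (Polynomial.X ^ p ^ m) ≠ 0 := by
      intro hc
      exact hne (m + 1) (by rw [hdef, hc, inv_zero])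
    rw [hdef, inv_inv]
  have hΘne : Θ ≠ 0 := by
    intro hc
    apply hne 0
    show (cfRem Θ 0 - emb (polyPart (cfRem Θ 0)))⁻¹ = 0
    have h00 : polyPart (cfRem Θ 0) = 0 := h0
    have he0 : emb (0 : Polynomial (ZMod p)) = 0 := by
      show Polynomial.aeval (XLS (ZMod p)) (0 : Polynomial (ZMod p)) = 0
      exact map_zero _
    rw [h00, he0]
    show (Θ - 0)⁻¹ = 0
    rw [hc]; simp
  have hG1 : cfRem Θ 1 = Θ⁻¹ := by
    show (cfRem Θ 0 - emb (polyPart (cfRem Θ 0)))⁻¹ = Θ⁻¹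
    have h00 : polyPart (cfRem Θ 0) = 0 := h0
    have he0 : emb (0 : Polynomial (ZMod p)) = 0 := by
      show Polynomial.aeval (XLS (ZMod p)) (0 : Polynomial (ZMod p)) = 0
      exact map_zero _
    rw [h00, he0]
    show (Θ - 0)⁻¹ = Θ⁻¹
    rw [sub_zero]
  -- Frobenius on the embedded powers of X
  have hemb : ∀ n : ℕ,
      emb (Polynomial.X ^ p ^ n : Polynomial (ZMod p)) ^ p
        = emb (Polynomial.X ^ p ^ (n + 1)) := by
    intro n
    show (Polynomial.aeval (XLS (ZMod p)) (Polynomial.X ^ p ^ n)) ^ p = _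
    rw [← map_pow, ← pow_mul, ← pow_succ]
    rfl
  -- the difference sequence
  set D : ℕ → LaurentSeries (ZMod p) :=
    fun n => cfRem Θ (n + 2) - (cfRem Θ (n + 1)) ^ p with hD
  have hDrec : ∀ n : ℕ, D n = (cfRem Θ (n + 3))⁻¹ - ((cfRem Θ (n + 2)) ^ p)⁻¹ := by
    intro n
    have e1 : cfRem Θ (n + 2) = emb (Polynomial.X ^ p ^ (n + 1)) + (cfRem Θ (n + 3))⁻¹ := by
      have := hrel (n + 1)
      rw [show n + 1 + 2 = n + 3 by ring, show n + 1 + 1 = n + 2 by ring] at this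
      rw [this]; ring
    have e2 : (cfRem Θ (n + 1)) ^ p
        = emb (Polynomial.X ^ p ^ (n + 1)) + ((cfRem Θ (n + 2)) ^ p)⁻¹ := by
      have e3 : cfRem Θ (n + 1) = emb (Polynomial.X ^ p ^ n) + (cfRem Θ (n + 2))⁻¹ := by
        rw [hrel n]; ring
      rw [e3, add_pow_char, hemb n, inv_pow]
    rw [hD]
    simp only
    linear_combination e1 - e2
  have hstep0 : ∀ n : ℕ, D (n + 1) = 0 → D n = 0 := by
    intro n hDn1
    have : cfRem Θ (n + 3) = (cfRem Θ (n + 2)) ^ p := by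
      have : cfRem Θ (n + 1 + 2) - (cfRem Θ (n + 1 + 1)) ^ p = 0 := hDn1
      rw [show n + 1 + 2 = n + 3 by ring, show n + 1 + 1 = n + 2 by ring] at this
      linear_combination this
    rw [hDrec n, this, sub_self]
  have hordpow : ∀ n : ℕ, ((cfRem Θ (n + 1)) ^ p).order = -((p : ℤ) ^ (n + 1)) := by
    intro n
    rw [HahnSeries.order_pow, hord n, nsmul_eq_mul]
    push_cast
    ring
  have hstep : ∀ n : ℕ, D (n + 1) ≠ 0 →
      D n ≠ 0 ∧ (D n).order = (D (n + 1)).order + 2 * (p : ℤ) ^ (n + 2) := by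
    intro n hDn1
    set a := cfRem Θ (n + 3) with ha
    set b := (cfRem Θ (n + 2)) ^ p with hb
    have hane : a ≠ 0 := hne (n + 2)
    have hbne : b ≠ 0 := pow_ne_zero p (hne (n + 1))
    have haord : a.order = -((p : ℤ) ^ (n + 2)) := hord (n + 2)
    have hbord : b.order = -((p : ℤ) ^ (n + 2)) := by
      have := hordpow (n + 1)
      rwa [show n + 1 + 1 = n + 2 by ring] at this
    have hDn1' : D (n + 1) = a - b := rfl
    have hba : b - a ≠ 0 := by
      intro hc
      apply hDn1
      rw [hDn1']
      linear_combination -hc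
    have hid : D n = (b - a) * (a⁻¹ * b⁻¹) := by
      rw [hDrec n, ← ha, ← hb]
      field_simp
    have hDnne : D n ≠ 0 := by
      rw [hid]
      exact mul_ne_zero hba (mul_ne_zero (inv_ne_zero hane) (inv_ne_zero hbne))
    refine ⟨hDnne, ?_⟩
    rw [hid, HahnSeries.order_mul hba (mul_ne_zero (inv_ne_zero hane) (inv_ne_zero hbne)),
      HahnSeries.order_mul (inv_ne_zero hane) (inv_ne_zero hbne),
      ls_order_inv hane, ls_order_inv hbne, haord, hbord]
    have : (b - a).order = (D (n + 1)).order := by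
      rw [hDn1', show b - a = -(a - b) by ring, HahnSeries.order_neg]
    rw [this]
    ring
  have hlow : ∀ n : ℕ, D n ≠ 0 → -((p : ℤ) ^ (n + 1)) ≤ (D n).order := by
    intro n hDn
    have h1 : D n = cfRem Θ (n + 2) + -((cfRem Θ (n + 1)) ^ p) := by
      rw [hD]; simp only; ring
    have := HahnSeries.min_order_le_order_add (x := cfRem Θ (n + 2))
      (y := -((cfRem Θ (n + 1)) ^ p)) (by rw [← h1]; exact hDn)
    rw [HahnSeries.order_neg, hord (n + 1), hordpow n, min_self, ← h1] at this
    exact this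
  have htel : ∀ n : ℕ, D 0 ≠ 0 →
      D n ≠ 0 ∧ (D n).order + 2 * (p : ℤ) ^ (n + 1) - 2 * (p : ℤ) ≤ (D 0).order := by
    intro n hD0
    induction n with
    | zero => exact ⟨hD0, by ring_nf; simp⟩
    | succ n ih =>
      obtain ⟨hDn, hbd⟩ := ih
      have hDn1 : D (n + 1) ≠ 0 := fun hc => hDn (hstep0 n hc)
      obtain ⟨-, heq⟩ := hstep n hDn1
      refine ⟨hDn1, ?_⟩
      have hpos : (0 : ℤ) ≤ (p : ℤ) ^ (n + 1) := by positivity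
      rw [heq] at hbd
      have : (p : ℤ) ^ (n + 1 + 1) = (p : ℤ) ^ (n + 2) := by ring_nf
      rw [this]
      linarith
  have hD0 : D 0 = 0 := by
    by_contra hD0
    set o : ℤ := (D 0).order with hoz
    set n : ℕ := o.toNat + 2 with hnn
    obtain ⟨hDn, hbd⟩ := htel n hD0
    have hlo := hlow n hDn
    have h1 : (p : ℤ) ^ (n + 1) - 2 * (p : ℤ) ≤ o := by linarith
    -- now derive a contradiction
    have h2n : (n : ℕ) < 2 ^ n := Nat.lt_two_pow_self
    have h2p : (2 : ℕ) ^ n ≤ p ^ n := Nat.pow_le_pow_left hp2 n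
    have hpn : (n : ℤ) < (p : ℤ) ^ n := by exact_mod_cast lt_of_lt_of_le h2n h2p
    have hon : o < (n : ℤ) := by
      have : o ≤ (o.toNat : ℤ) := Int.self_le_toNat o
      omega
    have h2ple : 2 * (p : ℤ) ≤ (p : ℤ) ^ n := by
      have : 2 * p ≤ p ^ n := by
        calc 2 * p ≤ p * p := by nlinarith
        _ = p ^ 2 := by ring
        _ ≤ p ^ n := Nat.pow_le_pow_right (by omega) (by omega)
      exact_mod_cast this
    have hpn1 : 2 * (p : ℤ) ^ n ≤ (p : ℤ) ^ (n + 1) := by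
      have : (p : ℤ) ^ (n + 1) = (p : ℤ) * (p : ℤ) ^ n := by ring
      rw [this]
      have hppos : (0 : ℤ) ≤ (p : ℤ) ^ n := by positivity
      nlinarith [show (2 : ℤ) ≤ (p : ℤ) by exact_mod_cast hp2]
    linarith
  -- conclude
  have hfrob : cfRem Θ 2 = (Θ ^ p)⁻¹ := by
    have : cfRem Θ 2 = (cfRem Θ 1) ^ p := by
      have : cfRem Θ (0 + 2) - (cfRem Θ (0 + 1)) ^ p = 0 := hD0
      simpa using sub_eq_zero.mp this
    rw [this, hG1, inv_pow]
  have hfinal : Θ ^ p = Θ⁻¹ - emb (Polynomial.X : Polynomial (ZMod p)) := by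
    have h00 := hrel 0
    rw [show (0 : ℕ) + 2 = 2 by ring, show (0 : ℕ) + 1 = 1 by ring, hfrob, inv_inv, hG1,
      pow_zero, pow_one] at h00
    exact h00
  have hmul : Θ ^ (p + 1) = 1 - emb (Polynomial.X : Polynomial (ZMod p)) * Θ := by
    rw [pow_succ, hfinal, sub_mul, inv_mul_cancel₀ hΘne]
  rw [hmul]
  ring

end Littlewood
end
end

section
/- For every positive integer n set u_n = (k+2) 3^n - 2 for a fixed non-negative integer k, U_n = H_0(X) H_1(-X) ... H_{n-2}(X) (-X+1) and V_n = (-X)^{[u_{n-1}]} (-X+1)(X+1) X^{[u_n]} (X+1)(-X+1) (-X)^{[u_{n-1}]} (for even n), where H_j(Y) = (Y+1) Y^{[u_j]} (Y+1). Then V_n is a palindrome, |U_n| = ((k+2)/2) 3^{n-1} - k/2, |V_n| = 5(k+2) 3^{n-1} - 2, and |V_n| >= 3|U_n| + 3 for all even n >= 2. -/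
noncomputable section

namespace Littlewood

/-- `u_n = (k+2) 3^n - 2`. -/
def u (k n : ℕ) : ℕ := (k + 2) * 3 ^ n - 2

/-- `H_j(Y) = (Y+1) Y^{[u_j]} (Y+1)`, a word over `F₃[X] \ F₃`. -/
def Hw (k j : ℕ) (Y : Polynomial (ZMod 3)) : List (Polynomial (ZMod 3)) :=
  [Y + 1] ++ List.replicate (u k j) Y ++ [Y + 1]

/-- `U_n = H_0(X) H_1(-X) ⋯ H_{n-2}((-1)^{n-2} X) (-X+1)`. -/
def Uw (k n : ℕ) : List (Polynomial (ZMod 3)) :=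
  ((List.range (n - 1)).map
      (fun j => Hw k j ((-1 : Polynomial (ZMod 3)) ^ j * Polynomial.X))).flatten
    ++ [-Polynomial.X + 1]

/-- `V_n = (-X)^{[u_{n-1}]} (-X+1)(X+1) X^{[u_n]} (X+1)(-X+1) (-X)^{[u_{n-1}]}`. -/
def Vw (k n : ℕ) : List (Polynomial (ZMod 3)) :=
  List.replicate (u k (n - 1)) (-Polynomial.X)
    ++ [-Polynomial.X + 1, Polynomial.X + 1]
    ++ List.replicate (u k n) Polynomial.X
    ++ [Polynomial.X + 1, -Polynomial.X + 1]
    ++ List.replicate (u k (n - 1)) (-Polynomial.X)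

lemma two_geom (m : ℕ) : 2 * ∑ i ∈ Finset.range m, 3 ^ i + 1 = 3 ^ m := by
  induction m with
  | zero => simp
  | succ m ih =>
    rw [Finset.sum_range_succ, pow_succ]
    omega

lemma sum_range_list (m : ℕ) (f : ℕ → ℕ) :
    (List.map f (List.range m)).sum = ∑ j ∈ Finset.range m, f j := by
  induction m with
  | zero => simp
  | succ m ih => rw [List.range_succ, Finset.sum_range_succ, List.map_append, List.sum_append, ih]; simp

lemma lenU (k n : ℕ) :
    2 * (Uw k n).length + k = (k + 2) * 3 ^ (n - 1) := by
  have hlen : (Uw k n).length = (∑ j ∈ Finset.range (n - 1), (k + 2) * 3 ^ j) + 1 := by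
    simp only [Uw, List.length_append, List.length_flatten, List.map_map]
    congr 1
    rw [show (List.length ∘ fun j => Hw k j ((-1 : Polynomial (ZMod 3)) ^ j * Polynomial.X))
        = fun j => (k + 2) * 3 ^ j from ?_, sum_range_list]
    funext j
    simp only [Function.comp, Hw, List.length_append, List.length_replicate, List.length_cons,
      List.length_nil, u]
    have h2 : 2 ≤ (k + 2) * 3 ^ j :=
      le_trans (by omega) (Nat.le_mul_of_pos_right _ (Nat.pow_pos (by norm_num)))
    omega
  rw [hlen, ← Finset.mul_sum]
  have := two_geom (n - 1)
  nlinarith [this]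

lemma lenV (k n : ℕ) (hn : 2 ≤ n) :
    (Vw k n).length + 2 = 5 * ((k + 2) * 3 ^ (n - 1)) := by
  simp only [Vw, List.length_append, List.length_replicate, List.length_cons, List.length_nil, u]
  have hrw : (3:ℕ) ^ n = 3 * 3 ^ (n - 1) := by
    conv_lhs => rw [show n = (n - 1) + 1 by omega]
    ring
  rw [hrw]
  have h1 : 1 ≤ (3:ℕ) ^ (n - 1) := Nat.one_le_pow _ _ (by norm_num)
  have h2 : (k + 2) * 1 ≤ (k + 2) * 3 ^ (n - 1) := Nat.mul_le_mul_left _ h1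
  have h3 : (k + 2) * (3 * 3 ^ (n - 1)) = 3 * ((k + 2) * 3 ^ (n - 1)) := by ring
  rw [h3]
  omega

/-- For every even `n ≥ 2`: `V_n` is a palindrome,
`|U_n| = ((k+2)/2) 3^{n-1} - k/2`, `|V_n| = 5(k+2) 3^{n-1} - 2`, and
`|V_n| ≥ 3 |U_n| + 3`. -/
theorem lasjaunias_words (k n : ℕ) (hn : 2 ≤ n) (heven : Even n) :
    (Vw k n).reverse = Vw k n ∧
      2 * ((Uw k n).length : ℤ) = (k + 2) * 3 ^ (n - 1) - k ∧
      ((Vw k n).length : ℤ) = 5 * (k + 2) * 3 ^ (n - 1) - 2 ∧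
      3 * (Uw k n).length + 3 ≤ (Vw k n).length := by
  have hU := lenU k n
  have hV := lenV k n hn
  have h1 : 1 ≤ (3:ℕ) ^ (n - 1) := Nat.one_le_pow _ _ (by norm_num)
  have h2 : (k + 2) * 1 ≤ (k + 2) * 3 ^ (n - 1) := Nat.mul_le_mul_left _ h1
  refine ⟨?_, ?_, ?_, ?_⟩
  · simp [Vw, List.reverse_append, List.reverse_replicate]
  · have := congrArg (Nat.cast : ℕ → ℤ) hU
    push_cast at this ⊢
    linarith
  · have := congrArg (Nat.cast : ℕ → ℤ) hV
    push_cast at this ⊢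
    linarith
  · omega

end Littlewood
end
end
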